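/- For every real number b > 0, the limit as the natural number n tends to infinity of ( ∑_{j=1}^∞ e^{−b·j^{1/n}} − b^{−n}·n! ) equals −1/(2·e^{b}). -/

import Mathlib

set_option maxHeartbeats 1000000

open Real MeasureTheory Set Filter intervalIntegral

namespace Stmt16Aux

variable {b p : ℝ}

/-- the function of interest -/
noncomputable def f (b p x : ℝ) : ℝ := Real.exp (-b * x ^ p)

/-- negative of its derivative -/
noncomputable def g (b p x : ℝ) : ℝ := b * p * (x ^ (p - 1) * Real.exp (-b * x ^ p))

lemma f_cont' (hp : 0 < p) : Continuous (f b p) := by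
  rw [continuous_iff_continuousAt]
  intro x
  exact Real.continuous_exp.continuousAt.comp
    (continuousAt_const.mul (Real.continuousAt_rpow_const x p (Or.inr hp.le)))

lemma f_deriv' {x : ℝ} (hx : (0:ℝ) < x) : HasDerivAt (f b p) (-(g b p x)) x := by
  have h1 : HasDerivAt (fun y : ℝ => y ^ p) (p * x ^ (p - 1)) x :=
    Real.hasDerivAt_rpow_const (Or.inl hx.ne')
  have h2 := (h1.const_mul (-b)).exp
  convert h2 using 1
  · rfl
  unfold g
  ring

lemma f_anti' (hb : 0 < b) (hp : 0 < p) {x y : ℝ} (hx : 0 ≤ x) (hxy : x ≤ y) :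
    f b p y ≤ f b p x := by
  unfold f
  have := Real.rpow_le_rpow hx hxy hp.le
  apply Real.exp_le_exp.2
  nlinarith

lemma g_nonneg' (hb : 0 < b) (hp : 0 < p) {x : ℝ} (hx : 0 ≤ x) : 0 ≤ g b p x := by
  unfold g; positivity

lemma g_anti' (hb : 0 < b) (hp : 0 < p) (hp1 : p ≤ 1) {x y : ℝ} (hx : 1 ≤ x) (hxy : x ≤ y) :
    g b p y ≤ g b p x := by
  unfold g
  have h0x : (0:ℝ) < x := by linarith
  have h1 : y ^ (p - 1) ≤ x ^ (p - 1) :=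
    Real.rpow_le_rpow_of_nonpos h0x hxy (by linarith)
  have h2 : Real.exp (-b * y ^ p) ≤ Real.exp (-b * x ^ p) := by
    have := Real.rpow_le_rpow h0x.le hxy hp.le
    apply Real.exp_le_exp.2
    nlinarith
  have hbp : 0 ≤ b * p := by positivity
  exact mul_le_mul_of_nonneg_left
    (mul_le_mul h1 h2 (Real.exp_pos _).le (Real.rpow_nonneg h0x.le _)) hbp

lemma mvt' (hp : 0 < p) {u v : ℝ} (hu : 0 < u) (huv : u < v) :
    ∃ c, u < c ∧ c < v ∧ f b p v - f b p u = -(g b p c) * (v - u) := by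
  obtain ⟨c, hc, hceq⟩ := exists_hasDerivAt_eq_slope (f b p) (fun x => -(g b p x)) huv
    (f_cont' hp).continuousOn (fun x hx => f_deriv' (lt_trans hu hx.1))
  refine ⟨c, hc.1, hc.2, ?_⟩
  rw [hceq, div_mul_cancel₀ _ (sub_ne_zero.2 huv.ne')]



section intervalest
variable {b p : ℝ}
variable (hb : 0 < b) (hp : 0 < p) (hp1 : p ≤ 1) {a : ℝ} (ha : 1 ≤ a)
include hb hp hp1 ha


/-- chord above: convexity -/
lemma chord (hx : x ∈ Icc a (a + 1)) :
    f b p x ≤ f b p a + (f b p (a + 1) - f b p a) * (x - a) := by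
  obtain ⟨hx1, hx2⟩ := hx
  rcases eq_or_lt_of_le hx1 with rfl | hx1
  · simp
  rcases eq_or_lt_of_le hx2 with rfl | hx2
  · have h : (f b p (a+1) - f b p a) * (a + 1 - a) = f b p (a+1) - f b p a := by ring
    linarith
  have ha0 : (0:ℝ) < a := by linarith
  obtain ⟨c1, hc1a, hc1b, he1⟩ := mvt' (b := b) (p := p) hp ha0 hx1
  obtain ⟨c2, hc2a, hc2b, he2⟩ := mvt' (b := b) (p := p) hp (by linarith : (0:ℝ) < x) hx2
  have hmono : g b p c2 ≤ g b p c1 := g_anti' hb hp hp1 (by linarith) (by linarith)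
  nlinarith [mul_pos (sub_pos.2 hx1) (sub_pos.2 hx2), sub_pos.2 hx1, sub_pos.2 hx2,
    mul_le_mul_of_nonneg_right hmono (mul_pos (sub_pos.2 hx1) (sub_pos.2 hx2)).le]

/-- tangent at midpoint below -/
lemma tangent (hx : x ∈ Icc a (a + 1)) :
    f b p (a + 1/2) + (-(g b p (a + 1/2))) * (x - (a + 1/2)) ≤ f b p x := by
  obtain ⟨hx1, hx2⟩ := hx
  set c : ℝ := a + 1/2 with hc
  have hc0 : (0:ℝ) < c := by rw [hc]; linarith
  have hca : a < c := by rw [hc]; linarith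
  have hcb : c < a + 1 := by rw [hc]; linarith
  rcases lt_trichotomy x c with h | rfl | h
  · obtain ⟨ξ, hξ1, hξ2, he⟩ := mvt' (b := b) (p := p) hp (by linarith : (0:ℝ) < x) h
    have : g b p c ≤ g b p ξ := g_anti' hb hp hp1 (by linarith) (by linarith)
    nlinarith [sub_pos.2 h]
  · simp
  · obtain ⟨ξ, hξ1, hξ2, he⟩ := mvt' (b := b) (p := p) hp hc0 h
    have : g b p ξ ≤ g b p c := g_anti' hb hp hp1 (by linarith) (by linarith)
    nlinarith [sub_pos.2 h]

lemma E1 : ∫ x in a..(a+1), f b p x ≤ (f b p a + f b p (a+1))/2 := by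
  have hle : a ≤ a + 1 := by linarith
  have hint : ∫ x in a..(a+1), (f b p a + (f b p (a+1) - f b p a) * (x - a))
      = (f b p a + f b p (a+1))/2 := by
    rw [intervalIntegral.integral_add (intervalIntegrable_const)
      ((IntervalIntegrable.sub intervalIntegrable_id intervalIntegrable_const).const_mul _),
      intervalIntegral.integral_const,
      intervalIntegral.integral_const_mul,
      intervalIntegral.integral_sub intervalIntegrable_id intervalIntegrable_const,
      integral_id, intervalIntegral.integral_const]
    simp only [smul_eq_mul]
    ring
  calc ∫ x in a..(a+1), f b p x
      ≤ ∫ x in a..(a+1), (f b p a + (f b p (a+1) - f b p a) * (x - a)) := by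
        apply intervalIntegral.integral_mono_on hle
          ((f_cont' (b := b) (p := p) hp).intervalIntegrable _ _)
          ((by fun_prop : Continuous fun x : ℝ => f b p a + (f b p (a+1) - f b p a) * (x - a)).intervalIntegrable _ _)
          (fun x hx => chord hb hp hp1 ha hx)
    _ = (f b p a + f b p (a+1))/2 := hint

lemma E2 : (f b p a + f b p (a+1))/2 ≤ (∫ x in a..(a+1), f b p x) + (g b p a - g b p (a+1))/4 := by
  have hle : a ≤ a + 1 := by linarith
  set c : ℝ := a + 1/2 with hcdef
  have hc0 : (0:ℝ) < c := by rw [hcdef]; linarith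
  have hca : a < c := by rw [hcdef]; linarith
  have hcb : c < a + 1 := by rw [hcdef]; linarith
  have hint : ∫ x in a..(a+1), (f b p c + (-(g b p c)) * (x - c)) = f b p c := by
    rw [intervalIntegral.integral_add (intervalIntegrable_const)
      ((IntervalIntegrable.sub intervalIntegrable_id intervalIntegrable_const).const_mul _),
      intervalIntegral.integral_const,
      intervalIntegral.integral_const_mul,
      intervalIntegral.integral_sub intervalIntegrable_id intervalIntegrable_const,
      integral_id, intervalIntegral.integral_const]
    simp only [smul_eq_mul]
    ring
  have hlow : f b p c ≤ ∫ x in a..(a+1), f b p x := by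
    rw [← hint]
    apply intervalIntegral.integral_mono_on hle
      ((by fun_prop : Continuous fun x : ℝ => f b p c + (-(g b p c)) * (x - c)).intervalIntegrable _ _)
      ((f_cont' (b := b) (p := p) hp).intervalIntegrable _ _)
      (fun x hx => tangent hb hp hp1 ha hx)
  obtain ⟨ξ2, hξ2a, hξ2b, he2⟩ := mvt' (b := b) (p := p) hp hc0 hcb
  obtain ⟨ξ1, hξ1a, hξ1b, he1⟩ := mvt' (b := b) (p := p) hp (by linarith : (0:ℝ) < a) hca
  have h1 : g b p ξ1 ≤ g b p a := g_anti' hb hp hp1 (by linarith) (by linarith)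
  have h2 : g b p (a+1) ≤ g b p ξ2 := g_anti' hb hp hp1 (by linarith) (by linarith)
  have e2 : f b p (a+1) - f b p c = -(g b p ξ2) * (1/2) := by rw [he2, hcdef]; ring
  have e1 : f b p c - f b p a = -(g b p ξ1) * (1/2) := by rw [he1, hcdef]; ring
  nlinarith [hlow]


end intervalest

variable {b : ℝ} {n : ℕ}


lemma integrableOn_f (hb : 0 < b) (hn : 1 ≤ n) :
    IntegrableOn (f b (n:ℝ)⁻¹) (Ioi 0) := by
  have hn0 : ((n:ℝ)) ≠ 0 := Nat.cast_ne_zero.2 (by omega)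
  rw [← integrableOn_Ioi_comp_rpow_iff _ hn0]
  have hint : IntegrableOn (fun x : ℝ => (n:ℝ) • (x ^ ((n:ℝ) - 1) * Real.exp (-b * x ^ (1:ℝ))))
      (Ioi 0) :=
    (integrableOn_rpow_mul_exp_neg_mul_rpow (by
      have : (1:ℝ) ≤ (n:ℝ) := by exact_mod_cast hn
      linarith) zero_lt_one hb).smul (n:ℝ)
  apply hint.congr_fun _ measurableSet_Ioi
  intro x hx
  have hx0 : (0:ℝ) < x := hx
  have key : (x ^ ((n:ℝ))) ^ ((n:ℝ))⁻¹ = x := by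
    rw [← Real.rpow_mul hx0.le, mul_inv_cancel₀ hn0, Real.rpow_one]
  simp only [f, smul_eq_mul, Real.rpow_one, key, abs_of_pos (by positivity : (0:ℝ) < (n:ℝ))]
  ring

lemma integral_f (hb : 0 < b) (hn : 1 ≤ n) :
    ∫ x in Ioi (0:ℝ), f b (n:ℝ)⁻¹ x = (b ^ n)⁻¹ * (n.factorial : ℝ) := by
  have hn0 : ((n:ℝ)) ≠ 0 := Nat.cast_ne_zero.2 (by omega)
  have hnpos : (0:ℝ) < (n:ℝ) := by positivity
  rw [← integral_comp_rpow_Ioi_of_pos (g := f b (n:ℝ)⁻¹) hnpos]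
  have heq : ∀ x ∈ Ioi (0:ℝ),
      ((n:ℝ) * x ^ ((n:ℝ) - 1)) • f b (n:ℝ)⁻¹ (x ^ ((n:ℝ)))
        = (n:ℝ) * (x ^ ((n:ℝ) - 1) * Real.exp (-(b * x))) := by
    intro x hx
    have hx0 : (0:ℝ) < x := hx
    have key : (x ^ ((n:ℝ))) ^ ((n:ℝ))⁻¹ = x := by
      rw [← Real.rpow_mul hx0.le, mul_inv_cancel₀ hn0, Real.rpow_one]
    simp only [f, smul_eq_mul, key]
    ring_nf
  rw [setIntegral_congr_fun measurableSet_Ioi heq, MeasureTheory.integral_const_mul,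
    integral_rpow_mul_exp_neg_mul_Ioi hnpos hb]
  obtain ⟨k, rfl⟩ : ∃ k, n = k + 1 := ⟨n - 1, by omega⟩
  rw [Real.rpow_natCast (1/b) (k+1),
    show ((k+1:ℕ):ℝ) = (k:ℝ)+1 by push_cast; ring,
    Real.Gamma_nat_eq_factorial,
    show ((1:ℝ)/b) ^ (k+1) = (b ^ (k+1))⁻¹ by rw [one_div, inv_pow],
    Nat.factorial_succ]
  push_cast
  ring



lemma iUnion_Ioc : (⋃ j : ℕ, Ioc (j:ℝ) ((j:ℝ)+1)) = Ioi 0 := by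
  ext x
  simp only [mem_iUnion, mem_Ioc, mem_Ioi]
  constructor
  · rintro ⟨j, hj1, _⟩
    have : (0:ℝ) ≤ (j:ℝ) := Nat.cast_nonneg j
    linarith
  · intro hx
    refine ⟨⌈x⌉₊ - 1, ?_, ?_⟩
    · have h1 : (⌈x⌉₊ : ℝ) < x + 1 := Nat.ceil_lt_add_one hx.le
      have h2 : 1 ≤ ⌈x⌉₊ := Nat.one_le_ceil_iff.2 hx
      have : ((⌈x⌉₊ - 1 : ℕ) : ℝ) = (⌈x⌉₊ : ℝ) - 1 := by
        push_cast [h2]; ring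
      rw [this]; linarith
    · have h2 : 1 ≤ ⌈x⌉₊ := Nat.one_le_ceil_iff.2 hx
      have : ((⌈x⌉₊ - 1 : ℕ) : ℝ) + 1 = (⌈x⌉₊ : ℝ) := by push_cast [h2]; ring
      rw [this]; exact Nat.le_ceil x

lemma pairwise_disj : Pairwise (Function.onFun Disjoint (fun j : ℕ => Ioc (j:ℝ) ((j:ℝ)+1))) := by
  intro i j hij
  apply Set.Ioc_disjoint_Ioc.2
  rcases hij.lt_or_gt with h | h
  · have h' : (i:ℝ) + 1 ≤ (j:ℝ) := by exact_mod_cast h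
    exact le_trans (min_le_left _ _) (le_trans h' (le_max_right _ _))
  · have h' : (j:ℝ) + 1 ≤ (i:ℝ) := by exact_mod_cast h
    exact le_trans (min_le_right _ _) (le_trans h' (le_max_left _ _))

variable {b : ℝ} {n : ℕ}

/-- Main per-n identity with error bounds. -/
lemma main_bound (hb : 0 < b) (hn : 1 ≤ n) :
    ∃ T : ℝ, 0 ≤ T ∧ T ≤ b * (n:ℝ)⁻¹ * Real.exp (-b) / 4 ∧
      (∑' j : ℕ, Real.exp (-b * ((j:ℝ) + 1) ^ ((n:ℝ)⁻¹))) - (b ^ n)⁻¹ * (n.factorial : ℝ)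
        = Real.exp (-b) / 2 - (∫ x in Ioc (0:ℝ) 1, f b (n:ℝ)⁻¹ x) + T := by
  set p : ℝ := (n:ℝ)⁻¹ with hpdef
  have hn1 : (1:ℝ) ≤ (n:ℝ) := by exact_mod_cast hn
  have hp : 0 < p := by rw [hpdef]; positivity
  have hp1 : p ≤ 1 := by rw [hpdef]; exact inv_le_one_of_one_le₀ hn1
  -- integrals over Ioc pieces
  set F : ℕ → ℝ := fun j => ∫ x in Ioc (j:ℝ) ((j:ℝ)+1), f b p x with hFdef
  have hFsum : HasSum F ((b ^ n)⁻¹ * (n.factorial : ℝ)) := by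
    have h := MeasureTheory.hasSum_integral_iUnion (μ := volume)
      (f := f b p) (s := fun j : ℕ => Ioc (j:ℝ) ((j:ℝ)+1))
      (fun j => measurableSet_Ioc) pairwise_disj
      (by rw [iUnion_Ioc]; exact integrableOn_f hb hn)
    rw [iUnion_Ioc, integral_f hb hn] at h
    exact h
  -- interval integral form
  have hFint : ∀ j : ℕ, F j = ∫ x in (j:ℝ)..((j:ℝ)+1), f b p x := by
    intro j
    rw [intervalIntegral.integral_of_le (by linarith [Nat.cast_nonneg (α := ℝ) j] : (j:ℝ) ≤ (j:ℝ)+1)]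
  -- the summands
  set s : ℕ → ℝ := fun j => f b p ((j:ℝ)+1) with hsdef
  have hs_le_F : ∀ j : ℕ, s j ≤ F j := by
    intro j
    have h1 : f b p ((j:ℝ)+1) = ∫ x in (j:ℝ)..((j:ℝ)+1), f b p ((j:ℝ)+1) := by
      rw [intervalIntegral.integral_const]
      simp
    rw [hFint j]
    show f b p ((j:ℝ)+1) ≤ _
    rw [h1]
    apply intervalIntegral.integral_mono_on (by linarith [Nat.cast_nonneg (α := ℝ) j])
      (intervalIntegrable_const) ((f_cont' hp).intervalIntegrable _ _)
    intro x hx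
    exact f_anti' hb hp (le_trans (Nat.cast_nonneg j) hx.1) hx.2
  have hs_pos : ∀ j : ℕ, 0 ≤ s j := fun j => (Real.exp_pos _).le
  have hs_summable : Summable s :=
    Summable.of_nonneg_of_le hs_pos hs_le_F hFsum.summable
  -- difference sequence
  have hdiff_summable : Summable (fun j => s j - F j) := hs_summable.sub hFsum.summable
  have hA : (∑' j : ℕ, s j) - (b ^ n)⁻¹ * (n.factorial : ℝ) = ∑' j, (s j - F j) :=
    (hs_summable.hasSum.sub hFsum).tsum_eq.symm
  -- split off j = 0
  have hsplit : ∑' j, (s j - F j) = (s 0 - F 0) + ∑' j, (s (j+1) - F (j+1)) :=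
    hdiff_summable.tsum_eq_zero_add
  -- tail : telescoping and epsilon
  set d : ℕ → ℝ := fun j => (s j - s (j+1)) / 2 with hddef
  set q : ℕ → ℝ := fun j => (g b p ((j:ℝ)+1) - g b p ((j:ℝ)+2)) / 4 with hqdef
  have hcast : ∀ j : ℕ, (((j+1:ℕ)):ℝ) = (j:ℝ)+1 := fun j => by push_cast; ring
  -- limits of s and g along ℕ
  have hsn_tendsto : Tendsto s atTop (nhds 0) := by
    have h1 : Tendsto (fun j : ℕ => ((j:ℝ)+1)) atTop atTop :=
      tendsto_atTop_add_const_right _ _ tendsto_natCast_atTop_atTop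
    have h2 : Tendsto (fun j : ℕ => ((j:ℝ)+1) ^ p) atTop atTop :=
      (tendsto_rpow_atTop hp).comp h1
    have h3 : Tendsto (fun j : ℕ => b * (((j:ℝ)+1) ^ p)) atTop atTop :=
      h2.const_mul_atTop hb
    have h4 := Real.tendsto_exp_neg_atTop_nhds_zero.comp h3
    apply h4.congr
    intro j
    simp only [Function.comp, hsdef, f, neg_mul]
  have hg_tendsto : Tendsto (fun j : ℕ => g b p ((j:ℝ)+1)) atTop (nhds 0) := by
    have hb' : ∀ j : ℕ, g b p ((j:ℝ)+1) ≤ b * p * s j := by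
      intro j
      have h1 : ((j:ℝ)+1) ^ (p-1) ≤ 1 :=
        Real.rpow_le_one_of_one_le_of_nonpos (by linarith [Nat.cast_nonneg (α := ℝ) j]) (by linarith)
      have h2 : (0:ℝ) < Real.exp (-b * ((j:ℝ)+1) ^ p) := Real.exp_pos _
      have : ((j:ℝ)+1) ^ (p-1) * Real.exp (-b * ((j:ℝ)+1) ^ p) ≤ Real.exp (-b * ((j:ℝ)+1) ^ p) := by
        nlinarith
      calc g b p ((j:ℝ)+1) = b * p * (((j:ℝ)+1) ^ (p-1) * Real.exp (-b * ((j:ℝ)+1) ^ p)) := rfl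
        _ ≤ b * p * Real.exp (-b * ((j:ℝ)+1) ^ p) :=
            mul_le_mul_of_nonneg_left this (by positivity)
        _ = b * p * s j := rfl
    have hlow : ∀ j : ℕ, 0 ≤ g b p ((j:ℝ)+1) :=
      fun j => g_nonneg' hb hp (by positivity)
    have htop : Tendsto (fun j : ℕ => b * p * s j) atTop (nhds 0) := by
      have := hsn_tendsto.const_mul (b * p)
      simpa using this
    exact squeeze_zero hlow hb' htop
  -- telescoping sums
  have hd_hasSum : HasSum d (s 0 / 2) := by
    have hd_nonneg : ∀ j, 0 ≤ d j := by
      intro j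
      have := f_anti' hb hp (b := b) (x := (j:ℝ)+1) (y := (j:ℝ)+1+1) (by positivity) (by linarith)
      simp only [hddef, hsdef, hcast]
      linarith
    rw [hasSum_iff_tendsto_nat_of_nonneg hd_nonneg]
    have hps : ∀ N : ℕ, ∑ j ∈ Finset.range N, d j = (s 0 - s N) / 2 := by
      intro N
      rw [hddef, ← Finset.sum_div, Finset.sum_range_sub' s]
    simp_rw [hps]
    have := (hsn_tendsto.const_sub (s 0)).div_const 2
    simpa using this
  have hq_hasSum : HasSum q (g b p 1 / 4) := by
    have hq_nonneg : ∀ j, 0 ≤ q j := by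
      intro j
      have := g_anti' hb hp hp1 (x := (j:ℝ)+1) (y := (j:ℝ)+2)
        (by linarith [Nat.cast_nonneg (α := ℝ) j]) (by linarith)
      simp only [hqdef]
      linarith
    rw [hasSum_iff_tendsto_nat_of_nonneg hq_nonneg]
    have hps : ∀ N : ℕ, ∑ j ∈ Finset.range N, q j
        = (g b p 1 - g b p ((N:ℝ)+1)) / 4 := by
      intro N
      have : ∀ j : ℕ, q j = ((fun k : ℕ => g b p ((k:ℝ)+1)) j - (fun k : ℕ => g b p ((k:ℝ)+1)) (j+1)) / 4 := by
        intro j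
        simp only [hqdef, hcast]
        have h2 : (j:ℝ)+2 = (j:ℝ)+1+1 := by ring
        rw [h2]
      simp_rw [this]
      rw [← Finset.sum_div, Finset.sum_range_sub' (fun k : ℕ => g b p ((k:ℝ)+1))]
      norm_num
    simp_rw [hps]
    have := (hg_tendsto.const_sub (g b p 1)).div_const 4
    simpa using this
  -- epsilon
  set ε : ℕ → ℝ := fun j => (s j + s (j+1)) / 2 - F (j+1) with hεdef
  have htail_eq : ∀ j : ℕ, s (j+1) - F (j+1) = -(d j) + ε j := by
    intro j
    simp only [hεdef, hddef]
    ring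
  have hε_bounds : ∀ j : ℕ, 0 ≤ ε j ∧ ε j ≤ q j := by
    intro j
    have ha : (1:ℝ) ≤ (j:ℝ)+1 := by linarith [Nat.cast_nonneg (α := ℝ) j]
    have hFj : F (j+1) = ∫ x in ((j:ℝ)+1)..((j:ℝ)+1+1), f b p x := by
      rw [hFint (j+1), hcast j]
    have hsj : s j = f b p ((j:ℝ)+1) := rfl
    have hsj1 : s (j+1) = f b p ((j:ℝ)+1+1) := by
      simp only [hsdef]
      rw [hcast j]
    have h1 := E1 hb hp hp1 ha
    have h2 := E2 hb hp hp1 ha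
    constructor
    · simp only [hεdef, hFj, hsj, hsj1]
      linarith
    · simp only [hεdef, hqdef, hFj, hsj, hsj1]
      have : (j:ℝ)+2 = (j:ℝ)+1+1 := by ring
      rw [this]
      linarith
  have hε_summable : Summable ε := by
    have h1 : Summable (fun j => s (j+1) - F (j+1)) := (summable_nat_add_iff 1).2 hdiff_summable
    have : ε = fun j => (s (j+1) - F (j+1)) + d j := by
      funext j
      have := htail_eq j
      linarith
    rw [this]
    exact h1.add hd_hasSum.summable
  have htail_sum : ∑' j, (s (j+1) - F (j+1)) = -(s 0 / 2) + ∑' j, ε j := by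
    calc ∑' j, (s (j+1) - F (j+1)) = ∑' j, (ε j - d j) := by
          apply tsum_congr
          intro j
          rw [htail_eq j]; ring
      _ = (∑' j, ε j) - (s 0 / 2) := by
          rw [Summable.tsum_sub hε_summable hd_hasSum.summable, hd_hasSum.tsum_eq]
      _ = -(s 0 / 2) + ∑' j, ε j := by ring
  refine ⟨∑' j, ε j, tsum_nonneg (fun j => (hε_bounds j).1), ?_, ?_⟩
  · have h := Summable.tsum_le_tsum (fun j => (hε_bounds j).2) hε_summable hq_hasSum.summable
    rw [hq_hasSum.tsum_eq] at h
    have hg1 : g b p 1 = b * p * Real.exp (-b) := by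
      simp [g, Real.one_rpow]
    rw [hg1] at h
    calc ∑' j, ε j ≤ b * p * Real.exp (-b) / 4 := h
      _ = b * (n:ℝ)⁻¹ * Real.exp (-b) / 4 := by rw [hpdef]
  · have hs0 : s 0 = Real.exp (-b) := by
      simp [hsdef, f, Real.one_rpow]
    have hF0 : F 0 = ∫ x in Ioc (0:ℝ) 1, f b p x := by
      simp only [hFdef, Nat.cast_zero, zero_add]
    have hfinal : (∑' j : ℕ, Real.exp (-b * ((j:ℝ) + 1) ^ ((n:ℝ)⁻¹))) = ∑' j, s j := rfl
    rw [hfinal, hA, hsplit, htail_sum, hs0, hF0]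
    ring

lemma integral_tendsto (hb : 0 < b) :
    Tendsto (fun n : ℕ => ∫ x in Ioc (0:ℝ) 1, f b (n:ℝ)⁻¹ x) atTop
      (nhds (Real.exp (-b))) := by
  have hcont : ∀ n : ℕ, Continuous (f b (n:ℝ)⁻¹) := by
    intro n
    rcases Nat.eq_zero_or_pos n with rfl | hn
    · have h0 : f b ((0:ℕ):ℝ)⁻¹ = fun _ : ℝ => Real.exp (-b * 1) := by
        funext x
        simp [f, Real.rpow_zero]
      rw [h0]
      exact continuous_const
    · rw [continuous_iff_continuousAt]
      intro x
      exact Real.continuous_exp.continuousAt.comp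
        (continuousAt_const.mul (Real.continuousAt_rpow_const x _ (Or.inr (by positivity))))
  have hlim : ∫ x in Ioc (0:ℝ) 1, Real.exp (-b) = Real.exp (-b) := by
    rw [setIntegral_const]
    simp [Real.volume_Ioc]
  rw [← hlim]
  apply MeasureTheory.tendsto_integral_of_dominated_convergence (bound := fun _ => (1:ℝ))
  · exact fun n => ((hcont n).aestronglyMeasurable).restrict
  · exact integrable_const 1
  · intro n
    rw [ae_restrict_iff' measurableSet_Ioc]
    filter_upwards with x hx
    have hx0 : (0:ℝ) < x := hx.1
    have h1 : 0 ≤ x ^ ((n:ℝ)⁻¹) := Real.rpow_nonneg hx0.le _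
    have : f b (n:ℝ)⁻¹ x ≤ 1 := by
      apply Real.exp_le_one_iff.2
      nlinarith
    have hpos : 0 < f b (n:ℝ)⁻¹ x := Real.exp_pos _
    rw [Real.norm_eq_abs, abs_of_pos hpos]
    exact this
  · rw [ae_restrict_iff' measurableSet_Ioc]
    filter_upwards with x hx
    have hx0 : (0:ℝ) < x := hx.1
    have h1 : Tendsto (fun n : ℕ => ((n:ℝ))⁻¹) atTop (nhds 0) :=
      tendsto_inv_atTop_nhds_zero_nat
    have h2 : ContinuousAt (fun q : ℝ => Real.exp (-b * x ^ q)) 0 := by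
      apply Real.continuous_exp.continuousAt.comp
      apply continuousAt_const.mul
      exact Real.continuousAt_const_rpow hx0.ne'
    have h3 := (h2.tendsto).comp h1
    simp only [Function.comp, Real.rpow_zero, mul_one] at h3
    exact h3

end Stmt16Aux

theorem stmt16 (b : ℝ) (hb : 0 < b) :
    Filter.Tendsto
      (fun n : ℕ =>
        (∑' j : ℕ, Real.exp (-b * ((j : ℝ) + 1) ^ ((n : ℝ)⁻¹))) - (b ^ n)⁻¹ * Nat.factorial n)
      Filter.atTop (nhds (-1 / (2 * Real.exp b))) := by
  classical
  set L : ℕ → ℝ := fun n => Real.exp (-b) / 2 - ∫ x in Set.Ioc (0:ℝ) 1, Stmt16Aux.f b (n:ℝ)⁻¹ x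
    with hLdef
  have hkey : (-1 : ℝ) / (2 * Real.exp b) = Real.exp (-b) / 2 - Real.exp (-b) := by
    rw [Real.exp_neg]
    field_simp
    ring
  have hL : Tendsto L atTop (nhds (-1 / (2 * Real.exp b))) := by
    rw [hkey]
    exact tendsto_const_nhds.sub (Stmt16Aux.integral_tendsto hb)
  have hbnd : Tendsto (fun n : ℕ => b * (n:ℝ)⁻¹ * Real.exp (-b) / 4) atTop (nhds 0) := by
    have h1 := tendsto_inv_atTop_nhds_zero_nat.const_mul b
    have h2 := (h1.mul_const (Real.exp (-b))).div_const 4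
    simpa using h2
  have hU : Tendsto (fun n : ℕ => L n + b * (n:ℝ)⁻¹ * Real.exp (-b) / 4) atTop
      (nhds (-1 / (2 * Real.exp b))) := by
    have := hL.add hbnd
    simpa using this
  apply tendsto_of_tendsto_of_tendsto_of_le_of_le' hL hU
  · filter_upwards [eventually_ge_atTop 1] with n hn
    obtain ⟨T, hT0, hT1, hEq⟩ := Stmt16Aux.main_bound hb hn
    rw [hEq]
    simp only [hLdef]
    linarith
  · filter_upwards [eventually_ge_atTop 1] with n hn
    obtain ⟨T, hT0, hT1, hEq⟩ := Stmt16Aux.main_bound hb hn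
    rw [hEq]
    simp only [hLdef]
    linarith
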